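/- arXiv:1207.6161 — 2 statements merged into one kernel-verified Lean document; each statement's English description precedes it below -/
import Mathlib

section
/- Let 1 ≤ j ≤ ℓ and let v^{(j)} = u^{(j)}_{k_1} ∧ u^{(j)}_{k_2} ∧ ⋯ ∧ u^{(j)}_{k_r} be a simple finite q-wedge in sector j. If min{k_1,…,k_r} ≥ s_j − r + 1 and |v^{(j)}|_{s_j} < 0, then v^{(j)} = 0. -/
open scoped BigOperators

/-! Formalization of:  Let `1 ≤ j ≤ ℓ` and let
`v^{(j)} = u^{(j)}_{k_1} ∧ ⋯ ∧ u^{(j)}_{k_r}` be a simple finite `q`-wedge in sector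
`j`.  If `min{k_1, …, k_r} ≥ s_j - r + 1` and `|v^{(j)}|_{s_j} < 0`, then
`v^{(j)} = 0`. -/

/-- The residue `c ∈ {1, …, n}` of the relabeled index `a` (`a = c - nm`). -/
def cRes (n : ℕ) (a : ℤ) : ℤ := (a - 1) % (n : ℤ) + 1

/-- The original label `k = c + n(d-1) - nℓm` of the factor `u^{(d)}_a` with `a = c - nm`. -/
def origK (n ℓ : ℕ) (d : ℕ) (a : ℤ) : ℤ :=
  cRes n a + (n : ℤ) * ((d : ℤ) - 1) - (n : ℤ) * (ℓ : ℤ) * ((cRes n a - a) / (n : ℤ))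

/-- `κ(a_1, …, a_r) = #{(i,j) : i < j, a_i = a_j}`. -/
def kappa {α : Type*} [DecidableEq α] : List α → ℕ
  | [] => 0
  | x :: xs => xs.countP (fun y => decide (y = x)) + kappa xs

/-- `sgn(m)` as in Uglov's straightening rule. -/
def sgnm (m₁ m₂ : ℤ) : ℤ := if m₁ < m₂ then 1 else if m₂ < m₁ then -1 else 0

/-- The sector of the `i`-th factor of a list of factors. -/
def sectorAt (L : List (ℕ × ℤ)) (i : ℕ) : ℕ := (L.getD i (0, 0)).1

/-- The factors of `L` are grouped into (contiguous) simple sector blocks. -/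
def Grouped (L : List (ℕ × ℤ)) : Prop :=
  ∀ i j k : ℕ, i < j → j < k → k < L.length →
    sectorAt L i = sectorAt L k → sectorAt L j = sectorAt L i

/-- The number of sector blocks of `L` preceding the sector-`j` block. -/
def blocksBefore (L : List (ℕ × ℤ)) (j : ℕ) : ℕ :=
  (((L.map Prod.fst).takeWhile (fun d => decide (d ≠ j))).dedup).length

/-- A wedge is *ordered* if its original labels are strictly decreasing. -/
def OrderedW (n ℓ : ℕ) (L : List (ℕ × ℤ)) : Prop :=
  (L.map fun f => origK n ℓ f.1 f.2).Chain' (· > ·) ∧ ∀ f ∈ L, 1 ≤ f.1 ∧ f.1 ≤ ℓ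

/-- An abstract model of the space of finite `q`-wedges (of all lengths), subject to
Uglov's straightening rules.  A factor `u^{(d)}_a` is recorded as the pair `(d, a)` of
its sector `1 ≤ d ≤ ℓ` and its relabeled index `a = c - nm`; a finite `q`-wedge is a
list of factors. -/
structure WedgeModel (n ℓ : ℕ) where
  /-- The ambient `ℚ(q)`-vector space containing all finite `q`-wedges. -/
  V : Type
  [acg : AddCommGroup V]
  [mod : Module (RatFunc ℚ) V]
  /-- The finite `q`-wedge `u^{(d_1)}_{a_1} ∧ ⋯ ∧ u^{(d_r)}_{a_r}`. -/
  w : List (ℕ × ℤ) → V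
  /-- `u_k ∧ u_k = 0`. -/
  w_repeat : ∀ (pre post : List (ℕ × ℤ)) (f : ℕ × ℤ), w (pre ++ [f, f] ++ post) = 0
  /-- Uglov's straightening rule (the two-factor exchange rule, applied in context). -/
  straighten : ∀ (pre post : List (ℕ × ℤ)) (c₁ c₂ : ℤ) (d₁ d₂ : ℕ) (m₁ m₂ : ℤ),
    1 ≤ c₁ → c₁ ≤ n → 1 ≤ c₂ → c₂ ≤ n → 1 ≤ d₁ → d₁ ≤ ℓ → 1 ≤ d₂ → d₂ ≤ ℓ →
    (c₁ + n * ((d₁ : ℤ) - 1) - n * ℓ * m₁ ≠ c₂ + n * ((d₂ : ℤ) - 1) - n * ℓ * m₂) →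
    w (pre ++ [(d₂, c₂ - n * m₂), (d₁, c₁ - n * m₁)] ++ post) =
      ((if d₁ = d₂ then -(RatFunc.X : RatFunc ℚ)⁻¹ else 1) *
        (if c₁ = c₂ then
            (if c₂ + n * ((d₂ : ℤ) - 1) - n * ℓ * m₂ < c₁ + n * ((d₁ : ℤ) - 1) - n * ℓ * m₁
              then (RatFunc.X : RatFunc ℚ) else (RatFunc.X : RatFunc ℚ)⁻¹)
          else 1)) •
        w (pre ++ [(d₁, c₁ - n * m₁), (d₂, c₂ - n * m₂)] ++ post) +
      (((sgnm m₁ m₂ : ℤ) : RatFunc ℚ) * (if d₁ = d₂ then -(RatFunc.X : RatFunc ℚ)⁻¹ else 1) *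
          ((RatFunc.X : RatFunc ℚ) - (RatFunc.X : RatFunc ℚ)⁻¹)) •
        ∑ jj ∈ Finset.Icc
            (if (c₂ < c₁ ∧ m₁ < m₂) ∨ (c₁ < c₂ ∧ m₂ < m₁) then (0 : ℤ) else 1)
            (|m₁ - m₂| -
              (if d₁ = d₂ then 1
               else if (d₁ < d₂ ∧ m₁ < m₂) ∨ (d₂ < d₁ ∧ m₂ < m₁) then 1 else 0)),
          w (pre ++ [((d₁ : ℕ), c₂ - n * m₁ - sgnm m₁ m₂ * n * jj),
                     ((d₂ : ℕ), c₁ - n * m₂ + sgnm m₁ m₂ * n * jj)] ++ post)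
  /-- The ordered wedges are linearly independent. -/
  ordered_indep :
    LinearIndependent (RatFunc ℚ) fun L : {L : List (ℕ × ℤ) // OrderedW n ℓ L} => w L.1
  /-- Every wedge (with sectors in range) is a linear combination of ordered wedges of
  the same length. -/
  ordered_span : ∀ L : List (ℕ × ℤ), (∀ f ∈ L, 1 ≤ f.1 ∧ f.1 ≤ ℓ) →
    w L ∈ Submodule.span (RatFunc ℚ)
      {v | ∃ G : List (ℕ × ℤ), OrderedW n ℓ G ∧ G.length = L.length ∧ v = w G}
  /-- The bar involution on scalars: a ring automorphism with `q ↦ q⁻¹`. -/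
  barq : RatFunc ℚ →+* RatFunc ℚ
  barq_X : barq RatFunc.X = (RatFunc.X)⁻¹
  /-- The bar involution on finite `q`-wedges. -/
  bar : V →+ V
  bar_smul : ∀ (c : RatFunc ℚ) (v : V), bar (c • v) = barq c • bar v
  bar_bar : ∀ v : V, bar (bar v) = v
  /-- `bar (u_{k_1} ∧ ⋯ ∧ u_{k_r}) = (-q)^{κ(d_1,…,d_r)} q^{-κ(c_1,…,c_r)}
  u_{k_r} ∧ ⋯ ∧ u_{k_1}`. -/
  bar_w : ∀ L : List (ℕ × ℤ),
    bar (w L) = ((-(RatFunc.X : RatFunc ℚ)) ^ kappa (L.map Prod.fst) *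
        ((RatFunc.X : RatFunc ℚ)⁻¹) ^ kappa (L.map fun f => cRes n f.2)) • w L.reverse
  /-- The operator `B'_{-m}[j]` on finite `q`-wedges. -/
  Bop : ℕ → ℕ → V →ₗ[RatFunc ℚ] V
  /-- On a wedge whose factors are grouped into simple sector blocks,
  `B'_{-m}[j]` multiplies by `q^{-bm}` (`b` = number of sector blocks preceding the
  sector-`j` block) and applies the level-one boson
  `B_{-m} (u^{(j)}_{k_1} ∧ ⋯) = ∑_i u^{(j)}_{k_1} ∧ ⋯ ∧ u^{(j)}_{k_i + nm} ∧ ⋯`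
  to the sector-`j` block. -/
  Bop_apply : ∀ (m j : ℕ) (L : List (ℕ × ℤ)), Grouped L →
    Bop m j (w L) = ((RatFunc.X : RatFunc ℚ)⁻¹ ^ (blocksBefore L j * m)) •
      ∑ p ∈ (Finset.range L.length).filter (fun p => sectorAt L p = j),
        w (L.set p (j, (L.getD p (0, 0)).2 + n * m))

attribute [instance] WedgeModel.acg WedgeModel.mod

/-- The size `|v|_c = ∑_{i=1}^{r} (k_i - c + i - 1)` of the simple finite `q`-wedge
with index sequence `k` for the charge `c` (0-based indexing). -/
def wsize {r : ℕ} (c : ℤ) (k : Fin r → ℤ) : ℤ :=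
  ∑ i : Fin r, (k i - c + (i.val : ℤ))

namespace WedgeAux

/-- position-weighted measure: `mu [a₀,…,a_{r-1}] = ∑ i * aᵢ`, via suffix sums. -/
def mu : List ℤ → ℤ
  | [] => 0
  | _ :: t => t.sum + mu t

lemma mu_append : ∀ P T : List ℤ, mu (P ++ T) = mu P + (P.length : ℤ) * T.sum + mu T := by
  intro P T
  induction P with
  | nil => simp [mu]
  | cons a P' ih =>
    show (P' ++ T).sum + mu (P' ++ T) = _
    rw [List.sum_append, ih]
    simp [mu]
    push_cast
    ring

lemma sum_lower (B : ℤ) : ∀ A : List ℤ, (∀ a ∈ A, B ≤ a) → (A.length : ℤ) * B ≤ A.sum := by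
  intro A
  induction A with
  | nil => simp
  | cons a t ih =>
    intro hB
    have h1 := ih (fun z hz => hB z (List.mem_cons_of_mem _ hz))
    have h2 := hB a List.mem_cons_self
    have h3 : ((a :: t).length : ℤ) * B = (t.length : ℤ) * B + B := by
      simp [List.length_cons]; push_cast; ring
    rw [h3, List.sum_cons]
    linarith

lemma mu_lower (B : ℤ) : ∀ A : List ℤ, (∀ a ∈ A, B ≤ a) →
    (A.length : ℤ) * ((A.length : ℤ) - 1) * B ≤ 2 * mu A := by
  intro A
  induction A with
  | nil => simp [mu]
  | cons a t ih =>
    intro hB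
    have h1 := ih (fun z hz => hB z (List.mem_cons_of_mem _ hz))
    have h2 := sum_lower B t (fun z hz => hB z (List.mem_cons_of_mem _ hz))
    show _ ≤ 2 * (t.sum + mu t)
    have h3 : ((a :: t).length : ℤ) * (((a :: t).length : ℤ) - 1) * B
        = (t.length : ℤ) * ((t.length : ℤ) - 1) * B + 2 * ((t.length : ℤ) * B) := by
      simp [List.length_cons]; push_cast; ring
    rw [h3]
    linarith

lemma chain_head_bound (B : ℤ) :
    ∀ A : List ℤ, A.Chain' (fun x y => y < x) → (∀ a ∈ A, B ≤ a) →
      ∀ h, A.head? = some h → B + (A.length : ℤ) - 1 ≤ h := by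
  intro A
  induction A with
  | nil => intro _ _ h hh; simp at hh
  | cons a t ih =>
    intro hc hBb h hh
    rw [List.head?_cons, Option.some.injEq] at hh
    subst hh
    cases t with
    | nil => have := hBb a (by simp); simp; linarith
    | cons b t' =>
      have h1 : b < a := (List.isChain_cons_cons.mp hc).1
      have h2 := (List.isChain_cons_cons.mp hc).2
      have h3 := ih h2 (fun z hz => hBb z (List.mem_cons_of_mem _ hz)) b (by rw [List.head?_cons])
      simp only [List.length_cons] at h3 ⊢
      push_cast at h3 ⊢
      linarith

lemma chain_sum_bound (B : ℤ) :
    ∀ A : List ℤ, A.Chain' (fun x y => y < x) → (∀ a ∈ A, B ≤ a) →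
      2 * (A.length : ℤ) * B + (A.length : ℤ) * ((A.length : ℤ) - 1) ≤ 2 * A.sum := by
  intro A
  induction A with
  | nil => simp
  | cons a t ih =>
    intro hc hBb
    have ht : t.Chain' (fun x y => y < x) := hc.tail
    have hs := ih ht (fun z hz => hBb z (List.mem_cons_of_mem _ hz))
    have hh := chain_head_bound B (a :: t) hc hBb a (by rw [List.head?_cons])
    simp only [List.sum_cons, List.length_cons] at hs hh ⊢
    push_cast at hs hh ⊢
    nlinarith [hs, hh]

lemma not_chain'_decomp {α : Type*} {R : α → α → Prop} :
    ∀ A : List α, ¬ A.Chain' R → ∃ P x y Q, A = P ++ x :: y :: Q ∧ ¬ R x y := by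
  intro A
  induction A with
  | nil => intro h; exact absurd List.isChain_nil h
  | cons a t ih =>
    intro h
    cases t with
    | nil => exact absurd (List.isChain_singleton a) h
    | cons b t' =>
      by_cases hR : R a b
      · have hnc : ¬ (b :: t').Chain' R := fun hc => h (List.isChain_cons_cons.mpr ⟨hR, hc⟩)
        obtain ⟨P, x, y, Q, hEq, hxy⟩ := ih hnc
        exact ⟨a :: P, x, y, Q, by rw [List.cons_append, hEq], hxy⟩
      · exact ⟨[], a, b, t', rfl, hR⟩

lemma cRes_decomp (n : ℕ) (a : ℤ) :
    cRes n a - (n : ℤ) * (-((a - 1) / (n : ℤ))) = a := by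
  have h := Int.emod_add_mul_ediv (a - 1) (n : ℤ)
  simp only [cRes]
  linear_combination h

lemma cRes_pos (n : ℕ) (hn : 1 ≤ n) (a : ℤ) : 1 ≤ cRes n a := by
  have hn0 : ((n : ℤ)) ≠ 0 := by exact_mod_cast (by omega : n ≠ 0)
  have h := Int.emod_nonneg (a - 1) hn0
  simp only [cRes]; linarith

lemma cRes_le (n : ℕ) (hn : 1 ≤ n) (a : ℤ) : cRes n a ≤ n := by
  have h := Int.emod_lt_of_pos (a - 1) (show (0 : ℤ) < n by exact_mod_cast hn)
  simp only [cRes]; linarith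

lemma exists_cm (n : ℕ) (hn : 1 ≤ n) (a : ℤ) :
    ∃ c m : ℤ, 1 ≤ c ∧ c ≤ n ∧ c - (n : ℤ) * m = a :=
  ⟨cRes n a, -((a - 1) / (n : ℤ)), cRes_pos n hn a, cRes_le n hn a, cRes_decomp n a⟩

lemma cm_cases {n : ℕ} (hn : 2 ≤ n) {c₁ c₂ m₁ m₂ : ℤ}
    (hc1 : 1 ≤ c₁) (hc1' : c₁ ≤ n) (hc2 : 1 ≤ c₂) (hc2' : c₂ ≤ n)
    (hlt : c₂ - (n : ℤ) * m₂ < c₁ - (n : ℤ) * m₁) :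
    m₁ < m₂ ∨ (m₁ = m₂ ∧ c₂ < c₁) := by
  rcases lt_trichotomy m₁ m₂ with h | h | h
  · exact Or.inl h
  · exact Or.inr ⟨h, by rw [h] at hlt; linarith⟩
  · exfalso
    have hn' : (0 : ℤ) ≤ (n : ℤ) := by positivity
    have h1 : (n : ℤ) * 1 ≤ (n : ℤ) * (m₁ - m₂) :=
      mul_le_mul_of_nonneg_left (by linarith) hn'
    have h2 : (n : ℤ) * (m₁ - m₂) = (n : ℤ) * m₁ - (n : ℤ) * m₂ := by ring
    have hn2 : (2 : ℤ) ≤ (n : ℤ) := by exact_mod_cast hn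
    linarith

lemma K_ne {n ℓ : ℕ} (hn : 2 ≤ n) (hℓ : 1 ≤ ℓ) {c₁ c₂ m₁ m₂ : ℤ}
    (hc1 : 1 ≤ c₁) (hc1' : c₁ ≤ n) (hc2 : 1 ≤ c₂) (hc2' : c₂ ≤ n)
    (h : m₁ < m₂ ∨ (m₁ = m₂ ∧ c₂ < c₁)) (d : ℤ) :
    c₁ + (n : ℤ) * d - (n : ℤ) * (ℓ : ℤ) * m₁ ≠ c₂ + (n : ℤ) * d - (n : ℤ) * (ℓ : ℤ) * m₂ := by
  have hn2 : (2 : ℤ) ≤ (n : ℤ) := by exact_mod_cast hn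
  have hl1 : (1 : ℤ) ≤ (ℓ : ℤ) := by exact_mod_cast hℓ
  have hP0 : (0 : ℤ) ≤ (n : ℤ) * (ℓ : ℤ) := by positivity
  have hPn : (n : ℤ) * 1 ≤ (n : ℤ) * (ℓ : ℤ) :=
    mul_le_mul_of_nonneg_left hl1 (by linarith)
  rcases h with h | ⟨hm, hc⟩
  · intro he
    have h2 : (n : ℤ) * (ℓ : ℤ) * (m₂ - m₁) ≥ (n : ℤ) * (ℓ : ℤ) * 1 :=
      mul_le_mul_of_nonneg_left (by linarith) hP0
    have h3 : (n : ℤ) * (ℓ : ℤ) * (m₂ - m₁)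
        = (n : ℤ) * (ℓ : ℤ) * m₂ - (n : ℤ) * (ℓ : ℤ) * m₁ := by ring
    linarith
  · rw [hm]; intro he; have : c₁ = c₂ := by linarith
    linarith

lemma gauss (r : ℕ) : (∑ i : Fin r, (i.val : ℤ)) * 2 = (r : ℤ) * ((r : ℤ) - 1) := by
  induction r with
  | zero => simp
  | succ m ih =>
    rw [Fin.sum_univ_castSucc]
    simp only [Fin.coe_castSucc, Fin.val_last]
    push_cast
    linear_combination ih

end WedgeAux


open WedgeAux

theorem main_aux (n ℓ : ℕ) (hn : 2 ≤ n) (hℓ : 1 ≤ ℓ) (W : WedgeModel n ℓ)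
    (j : ℕ) (hj1 : 1 ≤ j) (hjℓ : j ≤ ℓ) (B S : ℤ) (N : ℕ) :
    ∀ A : List ℤ, (∀ a ∈ A, B ≤ a) → A.sum = S →
      2 * S < 2 * (A.length : ℤ) * B + (A.length : ℤ) * ((A.length : ℤ) - 1) →
      (2 * mu A - (A.length : ℤ) * ((A.length : ℤ) - 1) * B).toNat < N →
      W.w (A.map fun a => (j, a)) = 0 := by
  induction N with
  | zero => intro A _ _ _ h; exact absurd h (Nat.not_lt_zero _)
  | succ N ih =>
    intro A hB hS hineq hmu
    by_cases hc : A.Chain' (fun x y : ℤ => y < x)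
    · exfalso
      have hcs := chain_sum_bound B A hc hB
      rw [hS] at hcs; linarith
    · obtain ⟨P, x, y, Q, hA, hxy⟩ := not_chain'_decomp A hc
      subst hA
      have hxley : x ≤ y := not_lt.mp hxy
      have hxmem : B ≤ x := hB x (by simp)
      have hymem : B ≤ y := hB y (by simp)
      have key : ∀ u v : ℤ, u + v = x + y → B ≤ u → B ≤ v → v ≤ y - 1 →
          W.w ((P ++ u :: v :: Q).map fun a => (j, a)) = 0 := by
        intro u v huv hu hv hvy
        have hB' : ∀ a ∈ P ++ u :: v :: Q, B ≤ a := by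
          intro a ha
          simp only [List.mem_append, List.mem_cons] at ha
          rcases ha with h | h | h | h
          · exact hB a (by simp [h])
          · exact h ▸ hu
          · exact h ▸ hv
          · exact hB a (by simp [h])
        have hS' : (P ++ u :: v :: Q).sum = S := by
          simp only [List.sum_append, List.sum_cons] at hS ⊢
          linarith
        have hlen2 : (((P ++ u :: v :: Q).length : ℤ)) = (((P ++ x :: y :: Q).length : ℤ)) := by
          simp
        refine ih _ hB' hS' ?_ ?_
        · rw [hlen2]; exact hineq
        · rw [hlen2]
          have hlow := mu_lower B (P ++ u :: v :: Q) hB'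
          rw [hlen2] at hlow
          have m1 := mu_append P (u :: v :: Q)
          have m2 := mu_append P (x :: y :: Q)
          simp only [mu, List.sum_cons] at m1 m2
          have hps : (P.length : ℤ) * (u + (v + Q.sum)) = (P.length : ℤ) * (x + (y + Q.sum)) := by
            rw [show u + (v + Q.sum) = x + (y + Q.sum) by linarith]
          have hmu2 : 2 * mu (P ++ u :: v :: Q) ≤ 2 * mu (P ++ x :: y :: Q) - 2 := by
            linarith [m1, m2, hps, hvy]
          generalize hC : (((P ++ x :: y :: Q).length : ℤ)) * ((((P ++ x :: y :: Q).length : ℤ)) - 1) * B = C at hmu hlow ⊢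
          omega
      by_cases hxyeq : x = y
      · subst hxyeq
        have hl : (P ++ x :: x :: Q).map (fun a => ((j : ℕ), a))
            = (P.map fun a => ((j : ℕ), a)) ++ [(j, x), (j, x)] ++ (Q.map fun a => ((j : ℕ), a)) := by
          simp
        rw [hl]
        exact W.w_repeat _ _ _
      · have hxy' : x < y := lt_of_le_of_ne hxley hxyeq
        obtain ⟨c₁, m₁, hc₁1, hc₁n, hdy⟩ := exists_cm n (by omega) y
        obtain ⟨c₂, m₂, hc₂1, hc₂n, hdx⟩ := exists_cm n (by omega) x
        have hcm : m₁ < m₂ ∨ (m₁ = m₂ ∧ c₂ < c₁) := by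
          refine cm_cases hn hc₁1 hc₁n hc₂1 hc₂n ?_
          rw [hdx, hdy]; exact hxy'
        have hKne : c₁ + (n : ℤ) * ((j : ℤ) - 1) - (n : ℤ) * (ℓ : ℤ) * m₁
            ≠ c₂ + (n : ℤ) * ((j : ℤ) - 1) - (n : ℤ) * (ℓ : ℤ) * m₂ :=
          K_ne hn hℓ hc₁1 hc₁n hc₂1 hc₂n hcm ((j : ℤ) - 1)
        have hw := W.straighten (P.map fun a => ((j : ℕ), a)) (Q.map fun a => ((j : ℕ), a))
          c₁ c₂ j j m₁ m₂ hc₁1 hc₁n hc₂1 hc₂n hj1 hjℓ hj1 hjℓ hKne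
        rw [hdx, hdy] at hw
        have hl : (P ++ x :: y :: Q).map (fun a => ((j : ℕ), a))
            = (P.map fun a => ((j : ℕ), a)) ++ [(j, x), (j, y)] ++ (Q.map fun a => ((j : ℕ), a)) := by
          simp
        rw [hl, hw]
        have hmain : W.w ((P.map fun a => ((j : ℕ), a)) ++ [(j, y), (j, x)]
            ++ (Q.map fun a => ((j : ℕ), a))) = 0 := by
          have hl2 : (P ++ y :: x :: Q).map (fun a => ((j : ℕ), a))
              = (P.map fun a => ((j : ℕ), a)) ++ [(j, y), (j, x)] ++ (Q.map fun a => ((j : ℕ), a)) := by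
            simp
          rw [← hl2]
          exact key y x (by ring) hymem hxmem (by linarith)
        rw [hmain, smul_zero, zero_add]
        have hn2 : (2 : ℤ) ≤ (n : ℤ) := by exact_mod_cast hn
        rcases hcm with hlt | ⟨hmeq, hclt⟩
        · -- m₁ < m₂ : every correction term vanishes
          have hsg : sgnm m₁ m₂ = 1 := by simp [sgnm, hlt]
          simp only [hsg, one_mul]
          rw [Finset.sum_eq_zero, smul_zero]
          intro jj hjj
          rw [Finset.mem_Icc] at hjj
          obtain ⟨hjlo, hjhi⟩ := hjj
          have habs : |m₁ - m₂| = m₂ - m₁ := by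
            rw [abs_sub_comm]; exact abs_of_nonneg (by linarith)
          have hjhi2 : jj ≤ m₂ - m₁ - 1 := by
            rw [habs] at hjhi
            split_ifs at hjhi with h1
            · exact hjhi
            · exact absurd trivial h1
          have hjcomb : 0 ≤ jj ∧ (1 ≤ jj ∨ c₂ < c₁) := by
            split_ifs at hjlo with hcc
            · rcases hcc with ⟨h, _⟩ | ⟨_, h⟩
              · exact ⟨hjlo, Or.inr h⟩
              · exact absurd hlt (asymm h)
            · exact ⟨by linarith, Or.inl hjlo⟩
          obtain ⟨hjj0, hjj1⟩ := hjcomb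
          show W.w ((P.map fun a => ((j : ℕ), a)) ++
              [((j : ℕ), c₂ - (n : ℤ) * m₁ - (n : ℤ) * jj), ((j : ℕ), c₁ - (n : ℤ) * m₂ + (n : ℤ) * jj)]
              ++ (Q.map fun a => ((j : ℕ), a))) = 0
          have hl3 : (P ++ (c₂ - (n : ℤ) * m₁ - (n : ℤ) * jj) :: (c₁ - (n : ℤ) * m₂ + (n : ℤ) * jj) :: Q).map
              (fun a => ((j : ℕ), a)) = (P.map fun a => ((j : ℕ), a)) ++
              [((j : ℕ), c₂ - (n : ℤ) * m₁ - (n : ℤ) * jj), ((j : ℕ), c₁ - (n : ℤ) * m₂ + (n : ℤ) * jj)]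
              ++ (Q.map fun a => ((j : ℕ), a)) := by simp
          rw [← hl3]
          have hmul : (n : ℤ) * 1 ≤ (n : ℤ) * (m₂ - m₁ - jj) :=
            mul_le_mul_of_nonneg_left (by linarith) (by linarith)
          have hexp : (n : ℤ) * (m₂ - m₁ - jj) = (n : ℤ) * m₂ - (n : ℤ) * m₁ - (n : ℤ) * jj := by
            ring
          refine key _ _ (by linarith [hdx, hdy]) ?_ ?_ ?_
          · linarith [hxmem, hdx]
          · rcases hjj1 with h1 | h1
            · have hmul2 : (n : ℤ) * 1 ≤ (n : ℤ) * jj :=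
                mul_le_mul_of_nonneg_left h1 (by linarith)
              linarith [hxmem, hdx]
            · have hmul2 : (0 : ℤ) ≤ (n : ℤ) * jj := mul_nonneg (by linarith) hjj0
              linarith [hxmem, hdx]
          · linarith [hdy]
        · -- m₁ = m₂ : the correction coefficient is zero
          have hsg : sgnm m₁ m₂ = 0 := by simp [sgnm, hmeq]
          rw [hsg]
          simp


/-- **Lemma**.  Let `v^{(j)} = u^{(j)}_{k_1} ∧ ⋯ ∧ u^{(j)}_{k_r}` be a simple finite
`q`-wedge in sector `j`.  If `min{k_1,…,k_r} ≥ s_j - r + 1` and `|v^{(j)}|_{s_j} < 0`,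
then `v^{(j)} = 0`. -/
theorem simple_wedge_eq_zero_of_size_neg
    (n ℓ : ℕ) (hn : 2 ≤ n) (hℓ : 1 ≤ ℓ) (s : ℕ → ℤ) (W : WedgeModel n ℓ)
    (j : ℕ) (hj1 : 1 ≤ j) (hjℓ : j ≤ ℓ) (r : ℕ) (k : Fin r → ℤ)
    (hmin : ∀ i : Fin r, s j - (r : ℤ) + 1 ≤ k i)
    (hsize : wsize (s j) k < 0) :
    W.w (List.ofFn fun i : Fin r => (j, k i)) = 0 := by
  have hmap : (List.ofFn fun i : Fin r => ((j : ℕ), k i))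
      = (List.ofFn k).map (fun a => ((j : ℕ), a)) := by
    rw [List.map_ofFn]; rfl
  rw [hmap]
  have hlen : (List.ofFn k).length = r := List.length_ofFn (f := k)
  have hBmem : ∀ a ∈ List.ofFn k, (s j - (r : ℤ) + 1) ≤ a := by
    intro a ha
    rw [List.mem_ofFn] at ha
    obtain ⟨i, rfl⟩ := ha
    exact hmin i
  have hsum : (List.ofFn k).sum = ∑ i, k i := List.sum_ofFn
  have hS2 : 2 * (List.ofFn k).sum < 2 * ((List.ofFn k).length : ℤ) * (s j - (r : ℤ) + 1)
      + ((List.ofFn k).length : ℤ) * (((List.ofFn k).length : ℤ) - 1) := by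
    rw [hsum, hlen]
    have hg := gauss r
    have hws : wsize (s j) k = (∑ i : Fin r, k i) - (r : ℤ) * s j + (∑ i : Fin r, (i.val : ℤ)) := by
      unfold wsize
      rw [Finset.sum_add_distrib, Finset.sum_sub_distrib, Finset.sum_const, Finset.card_univ,
        Fintype.card_fin, nsmul_eq_mul]
    rw [hws] at hsize
    nlinarith [hg, hsize]
  exact main_aux n ℓ hn hℓ W j hj1 hjℓ (s j - (r : ℤ) + 1) ((List.ofFn k).sum)
    ((2 * mu (List.ofFn k) - ((List.ofFn k).length : ℤ) * (((List.ofFn k).length : ℤ) - 1)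
      * (s j - (r : ℤ) + 1)).toNat + 1)
    (List.ofFn k) hBmem rfl hS2 (Nat.lt_succ_self _)
end

section
/- Let n ≥ 2 be an integer. For every partition λ there exist unique partitions μ and ν such that μ is n-restricted and λ_i = μ_i + n·ν_i for all i ≥ 1. -/
open scoped BigOperators

/-! Formalization of:  Let `n ≥ 2` be an integer.  For every partition `λ` there exist
unique partitions `μ` and `ν` such that `μ` is `n`-restricted and
`λ_i = μ_i + n·ν_i` for all `i`. -/

/-- A partition (of arbitrary size): a size together with a `Nat.Partition` of that size. -/
def Ptn : Type := Σ m : ℕ, Nat.Partition m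

instance : DecidableEq Ptn := by unfold Ptn; infer_instance

/-- The `i`-th part `λ_{i+1}` (`0`-based) of a partition: the `i`-th entry of the weakly
decreasing enumeration of the parts, `0` beyond the number of parts. -/
def Ptn.part (l : Ptn) (i : ℕ) : ℕ := ((l.2.parts.sort (· ≤ ·)).reverse).getD i 0

/-- `μ` is `n`-restricted: `0 ≤ μ_i - μ_{i+1} < n` for all `i`. -/
def Ptn.Restricted (n : ℕ) (l : Ptn) : Prop := ∀ i : ℕ, l.part i - l.part (i + 1) < n

namespace PtnAux

/-- The weakly decreasing list of parts. -/
def dlist (l : Ptn) : List ℕ := (l.2.parts.sort (· ≤ ·)).reverse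

lemma part_eq (l : Ptn) (i : ℕ) : l.part i = (dlist l).getD i 0 := rfl

lemma dlist_sorted (l : Ptn) : (dlist l).Pairwise (· ≥ ·) := by
  unfold dlist; rw [List.pairwise_reverse]
  exact Multiset.pairwise_sort _ (· ≤ ·)

lemma dlist_pos (l : Ptn) : ∀ x ∈ dlist l, 0 < x := by
  intro x hx
  rw [dlist, List.mem_reverse, Multiset.mem_sort] at hx
  exact l.2.parts_pos hx

lemma getD_antitone {L : List ℕ} (h : L.Pairwise (· ≥ ·)) {i j : ℕ} (hij : i ≤ j) :
    L.getD j 0 ≤ L.getD i 0 := by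
  rcases Nat.lt_or_ge j L.length with hj | hj
  · have hi : i < L.length := lt_of_le_of_lt hij hj
    rcases eq_or_lt_of_le hij with rfl | hlt
    · exact le_rfl
    · rw [List.getD_eq_getElem _ _ hj, List.getD_eq_getElem _ _ hi]
      exact (List.pairwise_iff_getElem.1 h) i j hi hj hlt
  · rw [List.getD_eq_default _ _ hj]; exact Nat.zero_le _

lemma part_anti (l : Ptn) {i j : ℕ} (hij : i ≤ j) : l.part j ≤ l.part i :=
  getD_antitone (dlist_sorted l) hij

lemma part_eq_zero (l : Ptn) {i : ℕ} (h : (dlist l).length ≤ i) : l.part i = 0 := by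
  rw [part_eq]; exact List.getD_eq_default _ _ h

lemma len_le {L1 L2 : List ℕ} (h1 : ∀ x ∈ L1, 0 < x)
    (h : ∀ i, L1.getD i 0 = L2.getD i 0) : L1.length ≤ L2.length := by
  by_contra hc
  push_neg at hc
  have h3 := h L2.length
  rw [List.getD_eq_default L2 _ le_rfl, List.getD_eq_getElem L1 _ hc] at h3
  have := h1 _ (L1.getElem_mem hc)
  omega

lemma ptn_ext {l1 l2 : Ptn} (h : ∀ i, l1.part i = l2.part i) : l1 = l2 := by
  have hlen : (dlist l1).length = (dlist l2).length :=
    le_antisymm (len_le (dlist_pos l1) (fun i => (part_eq l1 i) ▸ (part_eq l2 i) ▸ h i))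
      (len_le (dlist_pos l2) (fun i => (part_eq l1 i) ▸ (part_eq l2 i) ▸ (h i).symm))
  have hd : dlist l1 = dlist l2 := by
    apply List.ext_getElem hlen
    intro i hi1 hi2
    have hi := h i
    rw [part_eq, part_eq, List.getD_eq_getElem _ _ hi1, List.getD_eq_getElem _ _ hi2] at hi
    exact hi
  have hsort : (l1.2.parts.sort (· ≤ ·)) = (l2.2.parts.sort (· ≤ ·)) := by
    have := congrArg List.reverse hd
    simpa [dlist] using this
  have hp : l1.2.parts = l2.2.parts := by
    rw [← Multiset.sort_eq l1.2.parts (· ≤ ·), ← Multiset.sort_eq l2.2.parts (· ≤ ·), hsort]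
  obtain ⟨m1, p1⟩ := l1
  obtain ⟨m2, p2⟩ := l2
  have hm : m1 = m2 := by rw [← p1.parts_sum, ← p2.parts_sum]; exact congrArg Multiset.sum hp
  subst hm
  exact congrArg (Sigma.mk m1) (Nat.Partition.ext hp)

lemma mono_of_step {f : ℕ → ℕ} (h : ∀ i, f (i + 1) ≤ f i) :
    ∀ i j, i ≤ j → f j ≤ f i := by
  intro i j hij
  induction j with
  | zero => have : i = 0 := by omega
            subst this; exact le_rfl
  | succ j ih =>
    rcases Nat.lt_or_ge i (j + 1) with hlt | hge
    · exact le_trans (h j) (ih (by omega))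
    · have : i = j + 1 := by omega
      subst this; exact le_rfl

lemma exists_ptn (f : ℕ → ℕ) (hstep : ∀ i, f (i + 1) ≤ f i) (N : ℕ)
    (hN0 : f N = 0) : ∃ l : Ptn, ∀ i, l.part i = f i := by
  classical
  have hmono := mono_of_step hstep
  have hex : ∃ i, f i = 0 := ⟨N, hN0⟩
  set M := Nat.find hex with hM
  have hMzero : f M = 0 := Nat.find_spec hex
  have hpos : ∀ i < M, 0 < f i := fun i hi => Nat.pos_of_ne_zero (Nat.find_min hex hi)
  have hzero : ∀ i, M ≤ i → f i = 0 := fun i hi =>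
    Nat.le_zero.mp (hMzero ▸ hmono M i hi)
  set L : List ℕ := (List.range M).map f with hLdef
  have hlen : L.length = M := by simp [hLdef]
  have hget : ∀ i (h : i < L.length), L[i] = f i := by
    intro i h; simp [hLdef]
  have hsorted : L.Pairwise (· ≥ ·) := by
    rw [List.pairwise_iff_getElem]
    intro i j hi hj hij
    rw [hget i hi, hget j hj]
    exact hmono i j (le_of_lt hij)
  have hLpos : ∀ x ∈ L, 0 < x := by
    intro x hx
    rw [hLdef, List.mem_map] at hx
    obtain ⟨i, hi, rfl⟩ := hx
    exact hpos i (List.mem_range.mp hi)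
  refine ⟨⟨L.sum, ⟨(L : Multiset ℕ), fun {i} hi => hLpos i (by simpa using hi), by simp⟩⟩, ?_⟩
  intro i
  have hdl : dlist ⟨L.sum, ⟨(L : Multiset ℕ), fun {i} hi => hLpos i (by simpa using hi), by simp⟩⟩ = L := by
    unfold dlist
    have hperm : (Multiset.sort (L : Multiset ℕ) (· ≤ ·)).Perm L.reverse := by
      refine List.Perm.trans ?_ (L.reverse_perm).symm
      exact Multiset.coe_eq_coe.mp (Multiset.sort_eq (L : Multiset ℕ) (· ≤ ·))
    have hs2 : L.reverse.Pairwise (· ≤ ·) := by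
      rw [List.pairwise_reverse]; exact hsorted
    have := hperm.eq_of_pairwise' (Multiset.pairwise_sort _ _) hs2
    rw [this, List.reverse_reverse]
  show (dlist _).getD i 0 = f i
  rw [hdl]
  rcases Nat.lt_or_ge i M with hi | hi
  · rw [List.getD_eq_getElem _ _ (by omega : i < L.length), hget]
  · rw [List.getD_eq_default _ _ (by omega), hzero i hi]

lemma unique_residue {n a b c : ℕ} (hn : 0 < n) (hmod : a % n = b % n)
    (ha1 : c ≤ a) (ha2 : a < c + n) (hb1 : c ≤ b) (hb2 : b < c + n) : a = b := by
  rcases Nat.le_total a b with h | h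
  · have hd : n ∣ b - a := (Nat.modEq_iff_dvd' h).mp hmod
    rcases Nat.eq_zero_or_pos (b - a) with h0 | h0
    · omega
    · have := Nat.le_of_dvd h0 hd; omega
  · have hd : n ∣ a - b := (Nat.modEq_iff_dvd' h).mp hmod.symm
    rcases Nat.eq_zero_or_pos (a - b) with h0 | h0
    · omega
    · have := Nat.le_of_dvd h0 hd; omega

lemma uniq_aux (n : ℕ) (hn : 2 ≤ n) (lam : Ptn) (p q : Ptn × Ptn)
    (hp : p.1.Restricted n ∧ ∀ i : ℕ, lam.part i = p.1.part i + n * p.2.part i)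
    (hq : q.1.Restricted n ∧ ∀ i : ℕ, lam.part i = q.1.part i + n * q.2.part i) :
    ∀ i, p.1.part i = q.1.part i ∧ p.2.part i = q.2.part i := by
  obtain ⟨hpr, hpe⟩ := hp
  obtain ⟨hqr, hqe⟩ := hq
  set N := (dlist lam).length with hN
  have hzero : ∀ i, N ≤ i → lam.part i = 0 := fun i hi => part_eq_zero lam hi
  have key : ∀ d i, N ≤ i + d → p.1.part i = q.1.part i ∧ p.2.part i = q.2.part i := by
    intro d
    induction d with
    | zero =>
      intro i hi
      have h0 : lam.part i = 0 := hzero i (by omega)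
      have h1 := hpe i
      have h2 := hqe i
      rw [h0] at h1 h2
      have hp1 : p.1.part i = 0 := by omega
      have hq1 : q.1.part i = 0 := by omega
      have hp2 : n * p.2.part i = 0 := by omega
      have hq2 : n * q.2.part i = 0 := by omega
      rcases Nat.mul_eq_zero.mp hp2 with h | h
      · omega
      rcases Nat.mul_eq_zero.mp hq2 with h' | h'
      · omega
      exact ⟨by rw [hp1, hq1], by rw [h, h']⟩
    | succ d ih =>
      intro i hi
      rcases le_or_gt N (i + d) with hle | hlt
      · exact ih i hle
      have hnext := ih (i + 1) (by omega)
      have ha1 : p.1.part (i + 1) ≤ p.1.part i := part_anti p.1 (by omega)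
      have hb1 : q.1.part (i + 1) ≤ q.1.part i := part_anti q.1 (by omega)
      have ha2 : p.1.part i - p.1.part (i + 1) < n := hpr i
      have hb2 : q.1.part i - q.1.part (i + 1) < n := hqr i
      have hma : p.1.part i % n = lam.part i % n := by
        rw [hpe i]; exact (Nat.add_mul_mod_self_left _ _ _).symm
      have hmb : q.1.part i % n = lam.part i % n := by
        rw [hqe i]; exact (Nat.add_mul_mod_self_left _ _ _).symm
      have h1 : p.1.part i = q.1.part i := by
        refine unique_residue (n := n) (c := p.1.part (i + 1)) (by omega)
          (hma.trans hmb.symm) ha1 (by omega) ?_ ?_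
        · rw [hnext.1]; exact hb1
        · rw [hnext.1]; omega
      refine ⟨h1, ?_⟩
      have e1 := hpe i
      have e2 := hqe i
      rw [h1] at e1
      have : n * p.2.part i = n * q.2.part i := by omega
      exact Nat.eq_of_mul_eq_mul_left (by omega) this
  intro i
  exact key N i (by omega)

end PtnAux

open PtnAux in
/-- **Lemma**.  Let `n ≥ 2`.  Every partition `λ` admits a unique decomposition
`λ = μ + nν` with `μ`, `ν` partitions and `μ` `n`-restricted. -/
theorem existsUnique_restricted_decomposition (n : ℕ) (hn : 2 ≤ n) (lam : Ptn) :
    ∃! p : Ptn × Ptn, p.1.Restricted n ∧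
      ∀ i : ℕ, lam.part i = p.1.part i + n * p.2.part i := by
  classical
  set N := (dlist lam).length with hN
  have hzero : ∀ i, N ≤ i → lam.part i = 0 := fun i hi => part_eq_zero lam hi
  have hanti : ∀ i, lam.part (i + 1) ≤ lam.part i := fun i => part_anti lam (by omega)
  set δ : ℕ → ℕ := fun j => (lam.part j - lam.part (j + 1)) % n with hδ
  set μ : ℕ → ℕ := fun i => ∑ j ∈ Finset.Ico i N, δ j with hμ
  have hδlt : ∀ j, δ j < n := fun j => Nat.mod_lt _ (by omega)
  have hδle : ∀ j, δ j ≤ lam.part j - lam.part (j + 1) := fun j => Nat.mod_le _ _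
  have hμrec : ∀ i, i < N → μ i = δ i + μ (i + 1) := by
    intro i hi
    exact Finset.sum_eq_sum_Ico_succ_bot hi δ
  have hμN : ∀ i, N ≤ i → μ i = 0 := by
    intro i hi
    simp only [hμ]
    rw [Finset.Ico_eq_empty (by omega), Finset.sum_empty]
  have hμstep : ∀ i, μ (i + 1) ≤ μ i := by
    intro i
    exact Finset.sum_le_sum_of_subset (Finset.Ico_subset_Ico (by omega) le_rfl)
  -- key facts: μ i ≤ λ i and μ i ≡ λ i (mod n)
  have key : ∀ d i, N ≤ i + d → μ i ≤ lam.part i ∧ μ i % n = lam.part i % n := by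
    intro d
    induction d with
    | zero =>
      intro i hi
      rw [hμN i (by omega), hzero i (by omega)]
      exact ⟨le_rfl, rfl⟩
    | succ d ih =>
      intro i hi
      rcases le_or_gt N i with hge | hlt
      · rw [hμN i hge, hzero i hge]; exact ⟨le_rfl, rfl⟩
      have hnext := ih (i + 1) (by omega)
      have h1 : μ i ≤ lam.part i := by
        rw [hμrec i hlt]
        have := hδle i
        have := hanti i
        have := hnext.1
        omega
      refine ⟨h1, ?_⟩
      rw [hμrec i hlt, Nat.add_mod, hnext.2]
      have hδmod : δ i % n = (lam.part i - lam.part (i + 1)) % n :=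
        Nat.mod_mod_of_dvd _ dvd_rfl
      rw [hδmod, ← Nat.add_mod, Nat.sub_add_cancel (hanti i)]
  have keyall : ∀ i, μ i ≤ lam.part i ∧ μ i % n = lam.part i % n :=
    fun i => key N i (by omega)
  set ν : ℕ → ℕ := fun i => (lam.part i - μ i) / n with hν
  have hνmul : ∀ i, n * ν i = lam.part i - μ i := by
    intro i
    have hd : n ∣ lam.part i - μ i :=
      (Nat.modEq_iff_dvd' (keyall i).1).mp (keyall i).2
    exact Nat.mul_div_cancel' hd
  have heq : ∀ i, lam.part i = μ i + n * ν i := by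
    intro i
    have := hνmul i
    have := (keyall i).1
    omega
  have hνN : ∀ i, N ≤ i → ν i = 0 := by
    intro i hi
    simp only [hν]
    rw [hzero i hi, hμN i hi]
    simp
  have hνstep : ∀ i, ν (i + 1) ≤ ν i := by
    intro i
    rcases le_or_gt N i with hge | hlt
    · rw [hνN (i + 1) (by omega)]; exact Nat.zero_le _
    · have e1 := heq i
      have e2 := heq (i + 1)
      have e3 := hμrec i hlt
      have e4 := hδle i
      have e5 := hanti i
      have e6 := (keyall (i + 1)).1
      have : n * ν (i + 1) ≤ n * ν i := by omega
      exact Nat.le_of_mul_le_mul_left this (by omega)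
  obtain ⟨μP, hμP⟩ := exists_ptn μ hμstep N (hμN N le_rfl)
  obtain ⟨νP, hνP⟩ := exists_ptn ν hνstep N (hνN N le_rfl)
  have hres : μP.Restricted n := by
    intro i
    rw [hμP, hμP]
    rcases le_or_gt N i with hge | hlt
    · rw [hμN i hge, hμN (i + 1) (by omega)]; omega
    · have := hμrec i hlt
      have := hδlt i
      omega
  have hdec : ∀ i : ℕ, lam.part i = μP.part i + n * νP.part i := by
    intro i
    rw [hμP, hνP]
    exact heq i
  refine ⟨(μP, νP), ⟨hres, hdec⟩, ?_⟩
  rintro p hp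
  have huniq := uniq_aux n hn lam p (μP, νP) hp ⟨hres, hdec⟩
  have h1 : p.1 = μP := ptn_ext (fun i => (huniq i).1)
  have h2 : p.2 = νP := ptn_ext (fun i => (huniq i).2)
  exact Prod.ext h1 h2
end
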